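/- arXiv:2409.17689 — 2 statements merged into one kernel-verified Lean document; each statement's English description precedes it below -/
import Mathlib

section
/- Let Wⱼ ⪰ W̃ⱼ ⪰ 0 for j = 1,…,N be positive semidefinite operators on ℂ^{dⱼ}, and define 𝒲 = ⊗ⱼWⱼ − ⊗ⱼW̃ⱼ. If ρ is a fully separable state, i.e., a finite convex combination ρ = Σ_q λ_q ⊗ⱼ ρ_{j,q} of product density matrices with λ_q ≥ 0, Σ_q λ_q = 1, then Tr(𝒲ρ) ≥ 0. -/
open ComplexOrder Matrix

/-- The `N`-fold "Kronecker" product of local matrices, realized on the index type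
`∀ j, Fin (d j)` with entries `∏ j, W j (x j) (y j)`. -/
def prodMat {N : ℕ} {d : Fin N → ℕ} (W : ∀ j, Matrix (Fin (d j)) (Fin (d j)) ℂ) :
    Matrix (∀ j, Fin (d j)) (∀ j, Fin (d j)) ℂ :=
  Matrix.of fun x y => ∏ j, W j (x j) (y j)

lemma psd_trace_nonneg {n : Type*} [Fintype n] [DecidableEq n] {A : Matrix n n ℂ}
    (hA : A.PosSemidef) : 0 ≤ A.trace := by
  rw [Matrix.trace]
  apply Finset.sum_nonneg
  intro i _
  have := hA.dotProduct_mulVec_nonneg (Pi.single i 1)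
  simpa [dotProduct, Matrix.mulVec, Pi.single_apply] using this

lemma psd_trace_mul_nonneg {n : Type*} [Fintype n] [DecidableEq n] {A B : Matrix n n ℂ}
    (hA : A.PosSemidef) (hB : B.PosSemidef) : 0 ≤ (A * B).trace := by
  obtain ⟨y, hy⟩ : ∃ y : Matrix n n ℂ, B = yᴴ * y := by
    open scoped MatrixOrder in
    obtain ⟨y, rfl⟩ := CStarAlgebra.nonneg_iff_eq_star_mul_self.mp hB.nonneg
    exact ⟨y, rfl⟩
  have hAB : A * B = A * yᴴ * y := by rw [hy, Matrix.mul_assoc]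
  rw [hAB, Matrix.trace_mul_cycle]
  have hps : (y * A * yᴴ).PosSemidef := hA.mul_mul_conjTranspose_same y
  exact psd_trace_nonneg hps

lemma trace_prodMat_mul {N : ℕ} {d : Fin N → ℕ}
    (A B : ∀ j, Matrix (Fin (d j)) (Fin (d j)) ℂ) :
    (prodMat A * prodMat B).trace = ∏ j, (A j * B j).trace := by
  have : ∀ j, (A j * B j).trace = ∑ a, ∑ b, A j a b * B j b a := by
    intro j
    simp [Matrix.trace, Matrix.mul_apply, Matrix.diag, mul_comm]
  simp only [this]
  simp only [Matrix.trace, Matrix.mul_apply, Matrix.diag, prodMat, Matrix.of_apply]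
  rw [Fintype.prod_sum (fun j a => ∑ b, A j a b * B j b a)]
  congr 1
  ext x
  rw [Fintype.prod_sum (fun j b => A j (x j) b * B j b (x j))]
  congr 1
  ext y
  rw [← Finset.prod_mul_distrib]

/-- If `Wⱼ ⪰ W̃ⱼ ⪰ 0` for all `j` and `ρ` is fully separable, then
`Tr((⊗ⱼWⱼ − ⊗ⱼW̃ⱼ)ρ) ≥ 0`. -/
theorem stmt_3 {N : ℕ} {d : Fin N → ℕ}
    (W Wt : ∀ j, Matrix (Fin (d j)) (Fin (d j)) ℂ)
    (hord : ∀ j, (W j - Wt j).PosSemidef) (hpos : ∀ j, (Wt j).PosSemidef)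
    (ρ : Matrix (∀ j, Fin (d j)) (∀ j, Fin (d j)) ℂ)
    (m : ℕ) (lam : Fin m → ℝ) (ρs : Fin m → ∀ j, Matrix (Fin (d j)) (Fin (d j)) ℂ)
    (hlam : ∀ q, 0 ≤ lam q) (hsum : ∑ q, lam q = 1)
    (hρs : ∀ q j, (ρs q j).PosSemidef ∧ (ρs q j).trace = 1)
    (hρ : ρ = ∑ q, (lam q : ℂ) • prodMat (ρs q)) :
    0 ≤ ((prodMat W - prodMat Wt) * ρ).trace := by
  subst hρ
  rw [Finset.mul_sum, Matrix.trace_sum]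
  apply Finset.sum_nonneg
  intro q _
  rw [Matrix.mul_smul, Matrix.trace_smul]
  apply smul_nonneg
  · exact_mod_cast hlam q
  · rw [Matrix.sub_mul, Matrix.trace_sub, sub_nonneg,
      trace_prodMat_mul, trace_prodMat_mul]
    apply Finset.prod_le_prod
    · intro j _
      exact psd_trace_mul_nonneg (hpos j) (hρs q j).1
    · intro j _
      have h := psd_trace_mul_nonneg (hord j) (hρs q j).1
      rw [Matrix.sub_mul, Matrix.trace_sub, sub_nonneg] at h
      exact h
end

section
/- Let ρ be a state on ℂ^{d₁}⊗ℂ^{d₂}⊗ℂ^{d₃} that is biseparable across some bipartition. Then there exist two distinct subsystem indices k ≠ k' separated by that bipartition such that for all operators W_k ⪰ W̃_k ⪰ 0 on ℂ^{d_k} and W_{k'} ⪰ W̃_{k'} ⪰ 0 on ℂ^{d_{k'}}, one has Tr(𝒲^{(k,k')} ρ) ≥ 0, where 𝒲^{(k,k')} = (W_k⊗W_{k'} − W̃_k⊗W̃_{k'}) tensored with identity on the remaining subsystem (with appropriate subsystem ordering). -/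
open ComplexOrder Matrix Kronecker

section

variable {d₁ d₂ d₃ : ℕ}

/-- Embed `A ⊗ B` for the bipartition `1|23` into the tripartite space. -/
def split1 (A : Matrix (Fin d₁) (Fin d₁) ℂ)
    (B : Matrix (Fin d₂ × Fin d₃) (Fin d₂ × Fin d₃) ℂ) :
    Matrix (Fin d₁ × Fin d₂ × Fin d₃) (Fin d₁ × Fin d₂ × Fin d₃) ℂ :=
  Matrix.of fun x y => A x.1 y.1 * B x.2 y.2

/-- Embed `A ⊗ B` for the bipartition `2|13` into the tripartite space. -/
def split2 (A : Matrix (Fin d₂) (Fin d₂) ℂ)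
    (B : Matrix (Fin d₁ × Fin d₃) (Fin d₁ × Fin d₃) ℂ) :
    Matrix (Fin d₁ × Fin d₂ × Fin d₃) (Fin d₁ × Fin d₂ × Fin d₃) ℂ :=
  Matrix.of fun x y => A x.2.1 y.2.1 * B (x.1, x.2.2) (y.1, y.2.2)

/-- Embed `A ⊗ B` for the bipartition `3|12` into the tripartite space. -/
def split3 (A : Matrix (Fin d₃) (Fin d₃) ℂ)
    (B : Matrix (Fin d₁ × Fin d₂) (Fin d₁ × Fin d₂) ℂ) :
    Matrix (Fin d₁ × Fin d₂ × Fin d₃) (Fin d₁ × Fin d₂ × Fin d₃) ℂ :=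
  Matrix.of fun x y => A x.2.2 y.2.2 * B (x.1, x.2.1) (y.1, y.2.1)

/-- `ρ` is biseparable across the bipartition `1|23`. -/
def Bisep1 (ρ : Matrix (Fin d₁ × Fin d₂ × Fin d₃) (Fin d₁ × Fin d₂ × Fin d₃) ℂ) : Prop :=
  ∃ (m : ℕ) (lam : Fin m → ℝ) (ρA : Fin m → Matrix (Fin d₁) (Fin d₁) ℂ)
    (ρB : Fin m → Matrix (Fin d₂ × Fin d₃) (Fin d₂ × Fin d₃) ℂ),
    (∀ q, 0 ≤ lam q) ∧ (∑ q, lam q = 1) ∧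
    (∀ q, (ρA q).PosSemidef ∧ (ρA q).trace = 1) ∧
    (∀ q, (ρB q).PosSemidef ∧ (ρB q).trace = 1) ∧
    ρ = ∑ q, (lam q : ℂ) • split1 (ρA q) (ρB q)

/-- `ρ` is biseparable across the bipartition `2|13`. -/
def Bisep2 (ρ : Matrix (Fin d₁ × Fin d₂ × Fin d₃) (Fin d₁ × Fin d₂ × Fin d₃) ℂ) : Prop :=
  ∃ (m : ℕ) (lam : Fin m → ℝ) (ρA : Fin m → Matrix (Fin d₂) (Fin d₂) ℂ)
    (ρB : Fin m → Matrix (Fin d₁ × Fin d₃) (Fin d₁ × Fin d₃) ℂ),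
    (∀ q, 0 ≤ lam q) ∧ (∑ q, lam q = 1) ∧
    (∀ q, (ρA q).PosSemidef ∧ (ρA q).trace = 1) ∧
    (∀ q, (ρB q).PosSemidef ∧ (ρB q).trace = 1) ∧
    ρ = ∑ q, (lam q : ℂ) • split2 (ρA q) (ρB q)

/-- `ρ` is biseparable across the bipartition `3|12`. -/
def Bisep3 (ρ : Matrix (Fin d₁ × Fin d₂ × Fin d₃) (Fin d₁ × Fin d₂ × Fin d₃) ℂ) : Prop :=
  ∃ (m : ℕ) (lam : Fin m → ℝ) (ρA : Fin m → Matrix (Fin d₃) (Fin d₃) ℂ)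
    (ρB : Fin m → Matrix (Fin d₁ × Fin d₂) (Fin d₁ × Fin d₂) ℂ),
    (∀ q, 0 ≤ lam q) ∧ (∑ q, lam q = 1) ∧
    (∀ q, (ρA q).PosSemidef ∧ (ρA q).trace = 1) ∧
    (∀ q, (ρB q).PosSemidef ∧ (ρB q).trace = 1) ∧
    ρ = ∑ q, (lam q : ℂ) • split3 (ρA q) (ρB q)

/-- The operator `X` on subsystems `(1,2)` tensored with the identity on subsystem `3`. -/
def pad12 (X : Matrix (Fin d₁ × Fin d₂) (Fin d₁ × Fin d₂) ℂ) :
    Matrix (Fin d₁ × Fin d₂ × Fin d₃) (Fin d₁ × Fin d₂ × Fin d₃) ℂ :=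
  Matrix.of fun x y => X (x.1, x.2.1) (y.1, y.2.1) * (if x.2.2 = y.2.2 then 1 else 0)

/-- The operator `X` on subsystems `(1,3)` tensored with the identity on subsystem `2`. -/
def pad13 (X : Matrix (Fin d₁ × Fin d₃) (Fin d₁ × Fin d₃) ℂ) :
    Matrix (Fin d₁ × Fin d₂ × Fin d₃) (Fin d₁ × Fin d₂ × Fin d₃) ℂ :=
  Matrix.of fun x y => X (x.1, x.2.2) (y.1, y.2.2) * (if x.2.1 = y.2.1 then 1 else 0)

/-- The operator `X` on subsystems `(2,3)` tensored with the identity on subsystem `1`. -/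
def pad23 (X : Matrix (Fin d₂ × Fin d₃) (Fin d₂ × Fin d₃) ℂ) :
    Matrix (Fin d₁ × Fin d₂ × Fin d₃) (Fin d₁ × Fin d₂ × Fin d₃) ℂ :=
  Matrix.of fun x y => X x.2 y.2 * (if x.1 = y.1 then 1 else 0)

/-- All witnesses `𝒲^{(1,2)}` built from locally ordered PSD operators have nonnegative
expectation value on `ρ`. -/
def NonnegPair12 (ρ : Matrix (Fin d₁ × Fin d₂ × Fin d₃) (Fin d₁ × Fin d₂ × Fin d₃) ℂ) :
    Prop :=
  ∀ (W₁ Wt₁ : Matrix (Fin d₁) (Fin d₁) ℂ) (W₂ Wt₂ : Matrix (Fin d₂) (Fin d₂) ℂ),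
    (W₁ - Wt₁).PosSemidef → Wt₁.PosSemidef → (W₂ - Wt₂).PosSemidef → Wt₂.PosSemidef →
    0 ≤ (pad12 (d₃ := d₃) (W₁ ⊗ₖ W₂ - Wt₁ ⊗ₖ Wt₂) * ρ).trace

/-- All witnesses `𝒲^{(1,3)}` built from locally ordered PSD operators have nonnegative
expectation value on `ρ`. -/
def NonnegPair13 (ρ : Matrix (Fin d₁ × Fin d₂ × Fin d₃) (Fin d₁ × Fin d₂ × Fin d₃) ℂ) :
    Prop :=
  ∀ (W₁ Wt₁ : Matrix (Fin d₁) (Fin d₁) ℂ) (W₃ Wt₃ : Matrix (Fin d₃) (Fin d₃) ℂ),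
    (W₁ - Wt₁).PosSemidef → Wt₁.PosSemidef → (W₃ - Wt₃).PosSemidef → Wt₃.PosSemidef →
    0 ≤ (pad13 (d₂ := d₂) (W₁ ⊗ₖ W₃ - Wt₁ ⊗ₖ Wt₃) * ρ).trace

/-- All witnesses `𝒲^{(2,3)}` built from locally ordered PSD operators have nonnegative
expectation value on `ρ`. -/
def NonnegPair23 (ρ : Matrix (Fin d₁ × Fin d₂ × Fin d₃) (Fin d₁ × Fin d₂ × Fin d₃) ℂ) :
    Prop :=
  ∀ (W₂ Wt₂ : Matrix (Fin d₂) (Fin d₂) ℂ) (W₃ Wt₃ : Matrix (Fin d₃) (Fin d₃) ℂ),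
    (W₂ - Wt₂).PosSemidef → Wt₂.PosSemidef → (W₃ - Wt₃).PosSemidef → Wt₃.PosSemidef →
    0 ≤ (pad23 (d₁ := d₁) (W₂ ⊗ₖ W₃ - Wt₂ ⊗ₖ Wt₃) * ρ).trace


section Helpers

private lemma trace_mul_psd {n : Type*} [Fintype n] [DecidableEq n] {X A : Matrix n n ℂ}
    (hX : X.PosSemidef) (hA : A.PosSemidef) : 0 ≤ (X * A).trace := by
  obtain ⟨B, rfl⟩ : ∃ B : Matrix n n ℂ, A = Bᴴ * B := by
    open scoped MatrixOrder in
    obtain ⟨B, hB⟩ := CStarAlgebra.nonneg_iff_eq_star_mul_self.mp hA.nonneg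
    exact ⟨B, hB⟩
  rw [← Matrix.mul_assoc, Matrix.trace_mul_cycle]
  have h := hX.mul_mul_conjTranspose_same B
  calc (0:ℂ) ≤ ∑ i, (B * X * Bᴴ) i i := by
        apply Finset.sum_nonneg
        intro i _
        have := h.dotProduct_mulVec_nonneg (Pi.single i 1)
        simpa [dotProduct, Matrix.mulVec, dotProduct_single, Pi.single_apply]
          using this
    _ = (B * X * Bᴴ).trace := rfl

private lemma kron_one_psd {n m : Type*} [Fintype n] [Fintype m] [DecidableEq n] [DecidableEq m]
    {X : Matrix n n ℂ} (hX : X.PosSemidef) :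
    (X ⊗ₖ (1 : Matrix m m ℂ)).PosSemidef := by
  obtain ⟨B, rfl⟩ : ∃ B : Matrix n n ℂ, X = Bᴴ * B := by
    open scoped MatrixOrder in
    obtain ⟨B, hB⟩ := CStarAlgebra.nonneg_iff_eq_star_mul_self.mp hX.nonneg
    exact ⟨B, hB⟩
  have h1 : (B ⊗ₖ (1 : Matrix m m ℂ))ᴴ = Bᴴ ⊗ₖ (1 : Matrix m m ℂ) := by
    ext ⟨i,j⟩ ⟨k,l⟩
    simp [Matrix.conjTranspose_apply, Matrix.one_apply, eq_comm]
    split <;> simp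
  have : (Bᴴ * B) ⊗ₖ (1 : Matrix m m ℂ) = (B ⊗ₖ (1 : Matrix m m ℂ))ᴴ * (B ⊗ₖ 1) := by
    rw [h1, ← Matrix.mul_kronecker_mul, Matrix.one_mul]
  rw [this]
  exact Matrix.posSemidef_conjTranspose_mul_self _

private lemma sub_kron_one {n m : Type*} [DecidableEq m]
    (X Y : Matrix n n ℂ) :
    (X - Y) ⊗ₖ (1 : Matrix m m ℂ) = X ⊗ₖ (1 : Matrix m m ℂ) - Y ⊗ₖ (1 : Matrix m m ℂ) := by
  ext ⟨i,j⟩ ⟨k,l⟩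
  simp [Matrix.kroneckerMap_apply, sub_mul]

private lemma prod_sub_nonneg {a a' b b' : ℂ} (h1 : 0 ≤ a - a') (h2 : 0 ≤ a')
    (h3 : 0 ≤ b - b') (h4 : 0 ≤ b') : 0 ≤ a * b - a' * b' := by
  have h : a * b - a' * b' = (a-a')*(b-b') + (a-a')*b' + a'*(b-b') := by ring
  rw [h]
  have := mul_nonneg h1 h3
  have := mul_nonneg h1 h4
  have := mul_nonneg h2 h3
  positivity

end Helpers

section TraceLemmas

variable {d₁ d₂ d₃ : ℕ}

private lemma trace_fact1 (X₁ : Matrix (Fin d₁) (Fin d₁) ℂ) (X₂ : Matrix (Fin d₂) (Fin d₂) ℂ)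
    (A : Matrix (Fin d₁) (Fin d₁) ℂ) (B : Matrix (Fin d₂ × Fin d₃) (Fin d₂ × Fin d₃) ℂ) :
    (pad12 (X₁ ⊗ₖ X₂) * split1 A B).trace
      = (X₁ * A).trace * ((X₂ ⊗ₖ (1 : Matrix (Fin d₃) (Fin d₃) ℂ)) * B).trace := by
  simp only [Matrix.trace, Matrix.diag, Matrix.mul_apply, pad12, split1, Matrix.of_apply,
    Matrix.kroneckerMap_apply, Matrix.one_apply, Fintype.sum_prod_type, mul_ite, ite_mul,
    mul_one, mul_zero, zero_mul, one_mul, Finset.sum_ite_eq, Finset.sum_ite_eq',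
    Finset.mem_univ, if_true, Finset.mul_sum, Finset.sum_mul]
  rw [Finset.sum_comm]
  apply Finset.sum_congr rfl; intro a _
  rw [Finset.sum_comm]
  apply Finset.sum_congr rfl; intro a' _
  rw [Finset.sum_comm]
  conv_lhs => enter [2, y]; rw [Finset.sum_comm]
  rw [Finset.sum_comm]
  apply Finset.sum_congr rfl; intro b _
  rw [Finset.sum_comm]
  apply Finset.sum_congr rfl; intro y _
  apply Finset.sum_congr rfl; intro x _
  ring

private lemma trace_fact2 (X₁ : Matrix (Fin d₁) (Fin d₁) ℂ) (X₂ : Matrix (Fin d₂) (Fin d₂) ℂ)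
    (A : Matrix (Fin d₂) (Fin d₂) ℂ) (B : Matrix (Fin d₁ × Fin d₃) (Fin d₁ × Fin d₃) ℂ) :
    (pad12 (X₁ ⊗ₖ X₂) * split2 A B).trace
      = (X₂ * A).trace * ((X₁ ⊗ₖ (1 : Matrix (Fin d₃) (Fin d₃) ℂ)) * B).trace := by
  simp only [Matrix.trace, Matrix.diag, Matrix.mul_apply, pad12, split2, Matrix.of_apply,
    Matrix.kroneckerMap_apply, Matrix.one_apply, Fintype.sum_prod_type, mul_ite, ite_mul,
    mul_one, mul_zero, zero_mul, one_mul, Finset.sum_ite_eq, Finset.sum_ite_eq',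
    Finset.mem_univ, if_true, Finset.mul_sum, Finset.sum_mul]
  conv_lhs => enter [2, x]; rw [Finset.sum_comm]
  conv_lhs => enter [2, x, 2, c]; rw [Finset.sum_comm]
  apply Finset.sum_congr rfl; intro x _
  apply Finset.sum_congr rfl; intro c _
  apply Finset.sum_congr rfl; intro x2 _
  apply Finset.sum_congr rfl; intro x1 _
  apply Finset.sum_congr rfl; intro x4 _
  ring

private lemma trace_fact3 (X₁ : Matrix (Fin d₁) (Fin d₁) ℂ) (X₃ : Matrix (Fin d₃) (Fin d₃) ℂ)
    (A : Matrix (Fin d₃) (Fin d₃) ℂ) (B : Matrix (Fin d₁ × Fin d₂) (Fin d₁ × Fin d₂) ℂ) :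
    (pad13 (X₁ ⊗ₖ X₃) * split3 A B).trace
      = (X₃ * A).trace * ((X₁ ⊗ₖ (1 : Matrix (Fin d₂) (Fin d₂) ℂ)) * B).trace := by
  simp only [Matrix.trace, Matrix.diag, Matrix.mul_apply, pad13, split3, Matrix.of_apply,
    Matrix.kroneckerMap_apply, Matrix.one_apply, Fintype.sum_prod_type, mul_ite, ite_mul,
    mul_one, mul_zero, zero_mul, one_mul, Finset.sum_ite_eq, Finset.sum_ite_eq',
    Finset.mem_univ, if_true, Finset.mul_sum, Finset.sum_mul]
  conv_lhs => enter [2, x, 2, x1, 2, x2, 2, x3]; rw [Finset.sum_comm]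
  simp only [Finset.sum_ite_eq, Finset.mem_univ, if_true]
  conv_lhs => enter [2, x, 2, x1]; rw [Finset.sum_comm]
  apply Finset.sum_congr rfl; intro x _
  apply Finset.sum_congr rfl; intro x1 _
  apply Finset.sum_congr rfl; intro x2 _
  apply Finset.sum_congr rfl; intro x3 _
  apply Finset.sum_congr rfl; intro x5 _
  ring

private lemma pad12_sub (X Y : Matrix (Fin d₁ × Fin d₂) (Fin d₁ × Fin d₂) ℂ) :
    pad12 (d₃ := d₃) (X - Y) = pad12 X - pad12 Y := by
  ext x y
  simp only [pad12, Matrix.of_apply, Matrix.sub_apply]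
  split <;> simp

private lemma pad13_sub (X Y : Matrix (Fin d₁ × Fin d₃) (Fin d₁ × Fin d₃) ℂ) :
    pad13 (d₂ := d₂) (X - Y) = pad13 X - pad13 Y := by
  ext x y
  simp only [pad13, Matrix.of_apply, Matrix.sub_apply]
  split <;> simp

end TraceLemmas

/-- If a tripartite state `ρ` is biseparable across some bipartition, then there are two
distinct subsystems `k ≠ k'` separated by that bipartition such that every locally ordered
witness `𝒲^{(k,k')}` has nonnegative expectation value on `ρ`. -/

theorem stmt_15 (ρ : Matrix (Fin d₁ × Fin d₂ × Fin d₃) (Fin d₁ × Fin d₂ × Fin d₃) ℂ)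
    (hρ : ρ.PosSemidef) (hρ1 : ρ.trace = 1) :
    (Bisep1 ρ → NonnegPair12 ρ ∨ NonnegPair13 ρ) ∧
    (Bisep2 ρ → NonnegPair12 ρ ∨ NonnegPair23 ρ) ∧
    (Bisep3 ρ → NonnegPair13 ρ ∨ NonnegPair23 ρ) := by
  refine ⟨?_, ?_, ?_⟩
  · rintro ⟨m, lam, ρA, ρB, hlam, hsum1, hA, hB, rfl⟩
    left
    intro W₁ Wt₁ W₂ Wt₂ h1 h2 h3 h4
    rw [pad12_sub, Matrix.sub_mul, Matrix.trace_sub, Matrix.mul_sum, Matrix.mul_sum,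
      Matrix.trace_sum, Matrix.trace_sum, ← Finset.sum_sub_distrib]
    apply Finset.sum_nonneg
    intro q _
    rw [Matrix.mul_smul, Matrix.mul_smul, Matrix.trace_smul, Matrix.trace_smul, ← smul_sub,
      smul_eq_mul]
    have hc : (0:ℂ) ≤ (lam q : ℂ) := by exact_mod_cast hlam q
    apply mul_nonneg hc
    rw [trace_fact1, trace_fact1]
    apply prod_sub_nonneg
    · rw [← Matrix.trace_sub, ← Matrix.sub_mul]
      exact trace_mul_psd h1 (hA q).1
    · exact trace_mul_psd h2 (hA q).1
    · rw [← Matrix.trace_sub, ← Matrix.sub_mul, ← sub_kron_one]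
      exact trace_mul_psd (kron_one_psd h3) (hB q).1
    · exact trace_mul_psd (kron_one_psd h4) (hB q).1
  · rintro ⟨m, lam, ρA, ρB, hlam, hsum1, hA, hB, rfl⟩
    left
    intro W₁ Wt₁ W₂ Wt₂ h1 h2 h3 h4
    rw [pad12_sub, Matrix.sub_mul, Matrix.trace_sub, Matrix.mul_sum, Matrix.mul_sum,
      Matrix.trace_sum, Matrix.trace_sum, ← Finset.sum_sub_distrib]
    apply Finset.sum_nonneg
    intro q _
    rw [Matrix.mul_smul, Matrix.mul_smul, Matrix.trace_smul, Matrix.trace_smul, ← smul_sub,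
      smul_eq_mul]
    have hc : (0:ℂ) ≤ (lam q : ℂ) := by exact_mod_cast hlam q
    apply mul_nonneg hc
    rw [trace_fact2, trace_fact2]
    apply prod_sub_nonneg
    · rw [← Matrix.trace_sub, ← Matrix.sub_mul]
      exact trace_mul_psd h3 (hA q).1
    · exact trace_mul_psd h4 (hA q).1
    · rw [← Matrix.trace_sub, ← Matrix.sub_mul, ← sub_kron_one]
      exact trace_mul_psd (kron_one_psd h1) (hB q).1
    · exact trace_mul_psd (kron_one_psd h2) (hB q).1
  · rintro ⟨m, lam, ρA, ρB, hlam, hsum1, hA, hB, rfl⟩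
    left
    intro W₁ Wt₁ W₃ Wt₃ h1 h2 h3 h4
    rw [pad13_sub, Matrix.sub_mul, Matrix.trace_sub, Matrix.mul_sum, Matrix.mul_sum,
      Matrix.trace_sum, Matrix.trace_sum, ← Finset.sum_sub_distrib]
    apply Finset.sum_nonneg
    intro q _
    rw [Matrix.mul_smul, Matrix.mul_smul, Matrix.trace_smul, Matrix.trace_smul, ← smul_sub,
      smul_eq_mul]
    have hc : (0:ℂ) ≤ (lam q : ℂ) := by exact_mod_cast hlam q
    apply mul_nonneg hc
    rw [trace_fact3, trace_fact3]
    apply prod_sub_nonneg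
    · rw [← Matrix.trace_sub, ← Matrix.sub_mul]
      exact trace_mul_psd h3 (hA q).1
    · exact trace_mul_psd h4 (hA q).1
    · rw [← Matrix.trace_sub, ← Matrix.sub_mul, ← sub_kron_one]
      exact trace_mul_psd (kron_one_psd h1) (hB q).1
    · exact trace_mul_psd (kron_one_psd h2) (hB q).1


end
end
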